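/- Canonical shelving size bound: if I is a finite multiset of rectangles each of width at most 1, and the canonical shelving packs them greedily (in non-increasing height order, slicing vertically) into tight shelves of width 1, then the total height of all shelves is strictly less than 1 plus the total area of the items: size(J) < 1 + a(I), where each shelf's height equals the height of its tallest item. -/

import Mathlib

/-- Auxiliary: the sum of shelf heights is at most the first shelf's height
plus the total area of all shelves except the last. -/
lemma canshelv_aux (S : List (List (ℝ × ℝ))) (hne : ∀ sh ∈ S, sh ≠ [])
    (hw : ∀ sh ∈ S, ∀ p ∈ sh, 0 < p.1 ∧ p.1 ≤ 1)
    (hh : ∀ sh ∈ S, ∀ p ∈ sh, 0 < p.2 ∧ p.2 ≤ 1)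
    (hsort : (S.flatten.map Prod.snd).Pairwise (· ≥ ·))
    (hfull : ∀ i, i + 1 < S.length → ((S.getD i []).map Prod.fst).sum = 1) :
    (S.map (fun sh => (sh.map Prod.snd).headI)).sum ≤
      ((S.headI).map Prod.snd).headI +
        (S.dropLast.map (fun sh => (sh.map (fun p => p.1 * p.2)).sum)).sum := by
  induction S with
  | nil =>
    simp only [List.map_nil, List.sum_nil, List.headI_nil, List.dropLast_nil, add_zero]
    rw [show (default : List (ℝ × ℝ)) = [] from rfl]
    simp [List.headI]
    rw [show (default : ℝ) = 0 from rfl]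
  | cons sh S' ih =>
    cases S' with
    | nil => simp
    | cons sh' S'' =>
      cases sh' with
      | nil => exact absurd rfl (hne [] (by simp))
      | cons p₀ t' =>
        set c : ℝ := p₀.2 with hc
        -- sortedness split
        have hsplit : List.Pairwise (· ≥ ·)
            (sh.map Prod.snd ++ (((p₀ :: t') :: S'').flatten.map Prod.snd)) := by
          simpa [List.flatten_cons, List.map_append] using hsort
        have hge : ∀ q ∈ sh, c ≤ q.2 := by
          intro q hq
          have hmem : c ∈ ((p₀ :: t') :: S'').flatten.map Prod.snd := by
            simp [List.flatten_cons, hc]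
          exact (List.pairwise_append.mp hsplit).2.2 q.2 (List.mem_map_of_mem hq) c hmem
        -- shelf sh is full
        have hwidth : ((sh.map Prod.fst)).sum = 1 := by
          have := hfull 0 (by simp)
          simpa using this
        -- area bound
        have harea : c ≤ (sh.map (fun p => p.1 * p.2)).sum := by
          calc c = (sh.map Prod.fst).sum * c := by rw [hwidth, one_mul]
            _ = (sh.map (fun p => p.1 * c)).sum := (List.sum_map_mul_right _ _ _).symm
            _ ≤ (sh.map (fun p => p.1 * p.2)).sum := by
                refine List.sum_le_sum fun p hp => ?_
                exact mul_le_mul_of_nonneg_left (hge p hp) (hw sh (by simp) p hp).1.le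
        -- apply IH to the tail
        have ih' := ih (fun s hs => hne s (List.mem_cons_of_mem _ hs))
          (fun s hs => hw s (List.mem_cons_of_mem _ hs))
          (fun s hs => hh s (List.mem_cons_of_mem _ hs))
          (by
            have : List.Pairwise (· ≥ ·) (((p₀ :: t') :: S'').flatten.map Prod.snd) :=
              (List.pairwise_append.mp hsplit).2.1
            simpa using this)
          (by
            intro i hi
            have := hfull (i + 1) (by simpa using Nat.succ_lt_succ hi)
            simpa [List.getD_cons_succ] using this)
        -- combine
        simp only [List.map_cons, List.sum_cons, List.headI_cons,
          List.dropLast_cons₂] at ih' ⊢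
        linarith [ih', harea]

theorem canshelv_size_bound (S : List (List (ℝ × ℝ))) (hS : S ≠ [])
    (hne : ∀ sh ∈ S, sh ≠ [])
    (hw : ∀ sh ∈ S, ∀ p ∈ sh, 0 < p.1 ∧ p.1 ≤ 1)
    (hh : ∀ sh ∈ S, ∀ p ∈ sh, 0 < p.2 ∧ p.2 ≤ 1)
    (hsort : (S.flatten.map Prod.snd).Pairwise (· ≥ ·))
    (hfull : ∀ i, i + 1 < S.length → ((S.getD i []).map Prod.fst).sum = 1) :
    (S.map (fun sh => (sh.map Prod.snd).headI)).sum <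
      1 + (S.flatten.map (fun p => p.1 * p.2)).sum := by
  have haux := canshelv_aux S hne hw hh hsort hfull
  -- first shelf head height ≤ 1
  have hS0 : S.headI ∈ S := by
    cases S with
    | nil => exact absurd rfl hS
    | cons a b => simp
  have hhead1 : ((S.headI).map Prod.snd).headI ≤ 1 := by
    have h0 : S.headI ≠ [] := hne _ hS0
    obtain ⟨p, t, heq⟩ : ∃ p t, S.headI = p :: t := by
      cases h : S.headI with
      | nil => exact absurd h h0
      | cons a b => exact ⟨a, b, rfl⟩
    rw [heq]
    have := (hh _ hS0 p (by rw [heq]; simp)).2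
    simpa using this
  -- total area decomposes as dropLast + last shelf
  have hlast : S.getLast hS ∈ S := List.getLast_mem hS
  have hlastne : S.getLast hS ≠ [] := hne _ hlast
  have hlastpos : 0 < ((S.getLast hS).map (fun p => p.1 * p.2)).sum := by
    refine List.sum_pos _ ?_ (by simpa using hlastne)
    intro x hx
    obtain ⟨p, hp, rfl⟩ := List.mem_map.mp hx
    exact mul_pos (hw _ hlast p hp).1 (hh _ hlast p hp).1
  have htotal : (S.flatten.map (fun p => p.1 * p.2)).sum =
      (S.dropLast.map (fun sh => (sh.map (fun p => p.1 * p.2)).sum)).sum +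
        ((S.getLast hS).map (fun p => p.1 * p.2)).sum := by
    conv_lhs => rw [← List.dropLast_append_getLast hS]
    simp [List.flatten_append, List.map_append, List.sum_flatten,
      Function.comp_def]
  linarith [haux, hhead1, hlastpos, htotal.ge, htotal.le]
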